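/- arXiv:2011.06273 — 5 statements merged into one kernel-verified Lean document; each statement's English description precedes it below -/
import Mathlib

section
/- The Galois group of the splitting field of 𝔈_4(x) over ℚ is isomorphic to the symmetric group S_3. -/
open Polynomial Finset

/-- `𝔈ₙ(x) = xⁿ/n! + 2·∑_{i=0}^{n-1} xⁱ/i!` as a polynomial over `ℚ`. -/
noncomputable def E (n : ℕ) : Polynomial ℚ :=
  C ((1 : ℚ) / n.factorial) * X ^ n +
    C 2 * ∑ i ∈ Finset.range n, C ((1 : ℚ) / i.factorial) * X ^ i

instance : Fact (Nat.Prime 7) := ⟨by norm_num⟩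

/-- The cubic factor of `24·𝔈₄`. -/
noncomputable def q3 : ℚ[X] := X ^ 3 + C 6 * X ^ 2 + C 12 * X + C 24

/-- The cubic factor over `ℤ`. -/
noncomputable def zq : ℤ[X] := X ^ 3 + C 6 * X ^ 2 + C 12 * X + C 24

lemma zq_monic : zq.Monic := by unfold zq; monicity!

lemma q3_eq_map : q3 = zq.map (algebraMap ℤ ℚ) := by
  simp [q3, zq, Polynomial.map_add, Polynomial.map_mul, Polynomial.map_pow, map_ofNat]

lemma zq_map_natDegree : ((zq.map (Int.castRingHom (ZMod 7))).natDegree) = 3 := by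
  have : zq.map (Int.castRingHom (ZMod 7)) = X ^ 3 + C 6 * X ^ 2 + C 12 * X + C 24 := by
    simp [zq, Polynomial.map_add, Polynomial.map_mul, Polynomial.map_pow, map_ofNat]
  rw [this]; compute_degree!

lemma zq_irred : Irreducible zq := by
  apply zq_monic.irreducible_of_irreducible_map (Int.castRingHom (ZMod 7))
  rw [Polynomial.irreducible_iff_roots_eq_zero_of_degree_le_three
    (by rw [zq_map_natDegree]; norm_num) (by rw [zq_map_natDegree])]
  have hne : zq.map (Int.castRingHom (ZMod 7)) ≠ 0 := by
    intro h
    have := zq_map_natDegree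
    rw [h] at this; simp at this
  rw [Multiset.eq_zero_iff_forall_notMem]
  intro a ha
  rw [mem_roots hne] at ha
  have : (a : ZMod 7) ^ 3 + 6 * a ^ 2 + 12 * a + 24 = 0 := by
    simpa [zq, IsRoot] using ha
  clear ha
  revert a; decide

lemma q3_monic : q3.Monic := by unfold q3; monicity!

lemma q3_natDegree : q3.natDegree = 3 := by unfold q3; compute_degree!

lemma q3_irred : Irreducible q3 := by
  rw [q3_eq_map]
  exact (zq_monic.irreducible_iff_irreducible_map_fraction_map).mp zq_irred

lemma q3_aeval {K : Type*} [CommRing K] [Algebra ℚ K] (x : K) :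
    aeval x q3 = x ^ 3 + 6 * x ^ 2 + 12 * x + 24 := by
  simp [q3, map_ofNat]

lemma card_rootSet_C : Fintype.card (q3.rootSet ℂ) = 3 := by
  rw [card_rootSet_eq_natDegree q3_irred.separable (IsAlgClosed.splits _), q3_natDegree]

lemma real_root_eq {x : ℝ} (hx : x ∈ q3.rootSet ℝ) : (x + 2) ^ 3 = -16 := by
  rw [mem_rootSet] at hx
  have h := hx.2
  rw [q3_aeval] at h
  nlinarith [h]

lemma card_rootSet_R : Fintype.card (q3.rootSet ℝ) ≤ 1 := by
  rw [Fintype.card_le_one_iff]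
  rintro ⟨a, ha⟩ ⟨b, hb⟩
  have h : (a + 2) ^ 3 = (b + 2) ^ 3 := by rw [real_root_eq ha, real_root_eq hb]
  have hinj := (Odd.strictMono_pow (R := ℝ) (⟨1, by norm_num⟩ : Odd 3)).injective
  have : a + 2 = b + 2 := hinj h
  exact Subtype.ext (by linarith)

instance : Fact (Splits (q3.map (algebraMap ℚ ℂ))) := ⟨IsAlgClosed.splits _⟩

lemma gal_bij : Function.Bijective (Polynomial.Gal.galActionHom q3 ℂ) := by
  apply Polynomial.Gal.galActionHom_bijective_of_prime_degree' q3_irred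
  · rw [q3_natDegree]; norm_num
  · have := card_rootSet_R
    rw [card_rootSet_C]; omega
  · rw [card_rootSet_C]; omega

lemma hE_factor : E 4 = C ((1 : ℚ) / 24) * ((X + C 2) * q3) := by
  apply Polynomial.funext
  intro x
  simp [E, q3, Finset.sum_range_succ, Nat.factorial]
  ring

lemma q3_splits_aux {K : Type*} [Field K] [Algebra ℚ K]
    (h : Splits ((E 4).map (algebraMap ℚ K))) : Splits (q3.map (algebraMap ℚ K)) := by
  have hE0 : C ((1 : ℚ) / 24) * ((X + C 2) * q3) ≠ 0 :=
    mul_ne_zero (by simp) (mul_ne_zero (X_add_C_ne_zero 2) q3_monic.ne_zero)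
  rw [hE_factor] at h
  exact h.of_dvd (Polynomial.map_ne_zero hE0)
    (Polynomial.map_dvd _ (dvd_mul_of_dvd_right (dvd_mul_left q3 _) _))

lemma adjoin_aux {K : Type*} [Field K] [Algebra ℚ K]
    (h : Algebra.adjoin ℚ ((E 4).rootSet K) = ⊤) :
    Algebra.adjoin ℚ (q3.rootSet K) = ⊤ := by
  rw [eq_top_iff, ← h]
  apply Algebra.adjoin_le
  intro x hx
  rw [mem_rootSet] at hx
  have hval : aeval x (E 4) = 0 := hx.2
  rw [hE_factor] at hval
  simp only [map_mul, aeval_C, aeval_X, map_add] at hval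
  have h24 : (algebraMap ℚ K) (1 / 24) ≠ 0 :=
    (map_ne_zero_iff _ (algebraMap ℚ K).injective).mpr (by norm_num)
  rcases mul_eq_zero.mp hval with h | h
  · exact absurd h h24
  rcases mul_eq_zero.mp h with h' | h'
  · have hxval : x = algebraMap ℚ K (-2) := by
      rw [map_neg]
      linear_combination h'
    rw [hxval]
    exact Subalgebra.algebraMap_mem _ _
  · exact Algebra.subset_adjoin (by rw [mem_rootSet]; exact ⟨q3_monic.ne_zero, h'⟩)

lemma q3_splittingfield : IsSplittingField ℚ (E 4).SplittingField q3 :=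
  ⟨q3_splits_aux (SplittingField.splits (E 4)),
   adjoin_aux (SplittingField.adjoin_rootSet (E 4))⟩

/-- MulEquiv between permutation groups induced by an equiv of types. -/
def permMulEquiv {α β : Type*} (e : α ≃ β) : Equiv.Perm α ≃* Equiv.Perm β :=
  { e.permCongr with
    map_mul' := fun p q => by
      ext b
      simp [Equiv.permCongr_apply, Equiv.Perm.mul_apply] }

/-- The Galois group of the splitting field of `𝔈₄` over `ℚ` is isomorphic to
the symmetric group `S₃`. -/
theorem gal_E_four : Nonempty ((E 4).Gal ≃* Equiv.Perm (Fin 3)) := by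
  have hsf := q3_splittingfield
  let e0 : (E 4).SplittingField ≃ₐ[ℚ] q3.SplittingField :=
    IsSplittingField.algEquiv (E 4).SplittingField q3
  let g0 : (E 4).Gal ≃* q3.Gal := AlgEquiv.autCongr e0
  let g1 : q3.Gal ≃* Equiv.Perm (q3.rootSet ℂ) :=
    MulEquiv.ofBijective (Polynomial.Gal.galActionHom q3 ℂ) gal_bij
  let g2 : Equiv.Perm (q3.rootSet ℂ) ≃* Equiv.Perm (Fin 3) :=
    permMulEquiv (Fintype.equivFinOfCardEq card_rootSet_C)
  exact ⟨(g0.trans g1).trans g2⟩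
end

section
/- For every positive integer n, the discriminant of the monic polynomial n!·𝔈_n(x) over ℚ equals (-1)^{n(n-1)/2} · 2^{n-1} · (n!)^n · 𝔈_n(-n). -/
open Polynomial Finset

/-- The discriminant `∏_{1 ≤ i < j ≤ n} (αᵢ - αⱼ)²` of a monic rational polynomial,
computed from its list of roots `α₁, …, αₙ` (with multiplicity) in `ℂ`.  Since each
difference is squared, the value does not depend on the ordering of the roots. -/
noncomputable def discC (f : Polynomial ℚ) : ℂ :=
  let l := ((f.map (algebraMap ℚ ℂ)).roots).toList
  ∏ ij ∈ (Finset.range l.length ×ˢ Finset.range l.length).filter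
      (fun ij => ij.1 < ij.2), (l.getD ij.1 0 - l.getD ij.2 0) ^ 2

lemma list_prod_map {M : Type*} [CommMonoid M] (l : List ℂ) (f : ℂ → M) :
    (l.map f).prod = ∏ i ∈ Finset.range l.length, f (l.getD i 0) := by
  induction l with
  | nil => simp
  | cons a t ih => simp [Finset.prod_range_succ', ih, mul_comm]

lemma eval_derivative_prod_X_sub (n : ℕ) (g : ℕ → ℂ) {k : ℕ} (hk : k ∈ Finset.range n) :
    (derivative (∏ i ∈ Finset.range n, (X - C (g i)))).eval (g k) =
      ∏ j ∈ (Finset.range n).erase k, (g k - g j) := by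
  rw [show derivative (∏ i ∈ Finset.range n, (X - C (g i))) =
      ∑ b ∈ Finset.range n, (∏ a ∈ (Finset.range n).erase b, (X - C (g a))) *
        derivative (X - C (g b)) from by
    rw [Finset.prod_eq_multiset_prod, Polynomial.derivative_prod, Finset.sum_eq_multiset_sum]
    congr 1]
  rw [eval_finset_sum]
  rw [Finset.sum_eq_single k]
  · simp [eval_prod]
  · intro b hb hbk
    rw [eval_mul, eval_prod, Finset.prod_eq_zero (Finset.mem_erase.mpr ⟨hbk.symm, hk⟩)]
    · ring
    · simp
  · intro h; exact absurd hk h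

lemma sum_deg_lt (n : ℕ) (hn : 0 < n) (a : ℕ → ℚ) :
    (∑ i ∈ Finset.range n, C (a i) * X ^ i).degree < (n : WithBot ℕ) := by
  apply lt_of_le_of_lt (Polynomial.degree_sum_le _ _)
  rw [Finset.sup_lt_iff (by exact_mod_cast WithBot.bot_lt_coe n)]
  intro i hi
  exact lt_of_le_of_lt (degree_C_mul_X_pow_le i (a i))
    (by exact_mod_cast Finset.mem_range.mp hi)

lemma card_lt_pairs (n : ℕ) :
    ((Finset.range n ×ˢ Finset.range n).filter (fun ij : ℕ × ℕ => ij.1 < ij.2)).card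
      = n * (n - 1) / 2 := by
  rw [Finset.card_filter, Finset.sum_product]
  have h1 : ∀ i ∈ Finset.range n, (∑ j ∈ Finset.range n, if i < j then (1:ℕ) else 0)
      = n - 1 - i := by
    intro i hi
    rw [← Finset.card_filter]
    have : (Finset.range n).filter (fun j => i < j) = Finset.Ico (i+1) n := by
      ext j; simp; omega
    rw [this, Nat.card_Ico]
    omega
  rw [Finset.sum_congr rfl h1]
  have := Finset.sum_range_reflect (fun i => i) n
  rw [this, Finset.sum_range_id]
lemma offdiag_eq (n : ℕ) (g : ℕ → ℂ) :
    ∏ ij ∈ (Finset.range n ×ˢ Finset.range n).filter (fun ij => ij.1 ≠ ij.2),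
        (g ij.1 - g ij.2)
      = ∏ k ∈ Finset.range n, ∏ j ∈ (Finset.range n).erase k, (g k - g j) := by
  rw [Finset.prod_filter,
    Finset.prod_product' (f := fun i j => if i ≠ j then g i - g j else 1)]
  refine Finset.prod_congr rfl fun k _ => ?_
  rw [← Finset.prod_filter]
  congr 1
  ext j
  simp [ne_comm, Finset.mem_erase, and_comm]

lemma offdiag_split (n : ℕ) (g : ℕ → ℂ) :
    ∏ ij ∈ (Finset.range n ×ˢ Finset.range n).filter (fun ij => ij.1 ≠ ij.2),
        (g ij.1 - g ij.2)
      = (-1) ^ (n * (n - 1) / 2) *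
        ∏ ij ∈ (Finset.range n ×ˢ Finset.range n).filter (fun ij => ij.1 < ij.2),
          (g ij.1 - g ij.2) ^ 2 := by
  have hsplit : (Finset.range n ×ˢ Finset.range n).filter (fun ij : ℕ × ℕ => ij.1 ≠ ij.2)
      = (Finset.range n ×ˢ Finset.range n).filter (fun ij => ij.1 < ij.2)
        ∪ (Finset.range n ×ˢ Finset.range n).filter (fun ij => ij.2 < ij.1) := by
    rw [← Finset.filter_or]
    exact Finset.filter_congr fun x _ => by constructor <;> intro h <;> omega
  have hdisj : Disjoint
      ((Finset.range n ×ˢ Finset.range n).filter (fun ij : ℕ × ℕ => ij.1 < ij.2))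
      ((Finset.range n ×ˢ Finset.range n).filter (fun ij : ℕ × ℕ => ij.2 < ij.1)) := by
    rw [Finset.disjoint_left]
    intro a ha hb
    simp only [Finset.mem_filter] at ha hb
    omega
  rw [hsplit, Finset.prod_union hdisj]
  have hswap : ∏ ij ∈ (Finset.range n ×ˢ Finset.range n).filter
        (fun ij : ℕ × ℕ => ij.2 < ij.1), (g ij.1 - g ij.2)
      = ∏ ij ∈ (Finset.range n ×ˢ Finset.range n).filter
        (fun ij : ℕ × ℕ => ij.1 < ij.2), (g ij.2 - g ij.1) := by
    refine Finset.prod_bij' (fun a _ => Prod.swap a) (fun a _ => Prod.swap a) ?_ ?_ ?_ ?_ ?_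
    · intro a ha
      simp only [Finset.mem_filter, Finset.mem_product, Finset.mem_range, Prod.fst_swap,
        Prod.snd_swap] at ha ⊢
      omega
    · intro a ha
      simp only [Finset.mem_filter, Finset.mem_product, Finset.mem_range, Prod.fst_swap,
        Prod.snd_swap] at ha ⊢
      omega
    · intro a _; simp
    · intro a _; simp
    · intro a _; rfl
  rw [hswap]
  have hneg : ∏ ij ∈ (Finset.range n ×ˢ Finset.range n).filter
        (fun ij : ℕ × ℕ => ij.1 < ij.2), (g ij.2 - g ij.1)
      = (-1) ^ (n * (n - 1) / 2) * ∏ ij ∈ (Finset.range n ×ˢ Finset.range n).filter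
        (fun ij : ℕ × ℕ => ij.1 < ij.2), (g ij.1 - g ij.2) := by
    rw [← card_lt_pairs n, ← Finset.prod_const (-1 : ℂ), ← Finset.prod_mul_distrib]
    exact Finset.prod_congr rfl fun x _ => by ring
  rw [hneg, Finset.prod_pow]
  ring

lemma fact_div (i : ℕ) : (1:ℚ) / (i+1).factorial * ((i:ℚ)+1) = 1 / i.factorial := by
  have h1 : ((i+1).factorial : ℚ) ≠ 0 := by exact_mod_cast (i+1).factorial_ne_zero
  have h2 : (i.factorial : ℚ) ≠ 0 := by exact_mod_cast i.factorial_ne_zero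
  field_simp
  push_cast [Nat.factorial_succ]
  ring

lemma E_derivative (m : ℕ) : derivative (E (m + 1)) = E m := by
  rw [E, E, derivative_add, derivative_C_mul, derivative_X_pow, derivative_C_mul,
    derivative_sum]
  have h1 : C ((1:ℚ) / (m+1).factorial) * (C ((m:ℚ)+1) * X ^ m)
      = C ((1:ℚ) / m.factorial) * X ^ m := by
    rw [← mul_assoc, ← C_mul, fact_div]
  have h2 : ∀ i : ℕ, derivative (C ((1:ℚ)/i.factorial) * X ^ i)
      = C ((1:ℚ)/i.factorial) * (C (i:ℚ) * X ^ (i-1)) := fun i => by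
    rw [derivative_C_mul, derivative_X_pow]
  rw [Finset.sum_range_succ']
  simp only [h2]
  have h3 : ∀ i : ℕ, C ((1:ℚ)/(i+1).factorial) * (C (((i+1:ℕ)):ℚ) * X ^ ((i+1)-1))
      = C ((1:ℚ)/i.factorial) * X ^ i := fun i => by
    rw [← mul_assoc, ← C_mul]
    push_cast
    rw [fact_div]
  simp only [h3]
  simp
lemma E_sub (m : ℕ) :
    ((m+1).factorial : ℚ) • E (m+1) - ((m+1).factorial : ℚ) • E m
      = X ^ m * (X + C ((m:ℚ)+1)) := by
  have hne : ((m+1).factorial : ℚ) ≠ 0 := by exact_mod_cast (m+1).factorial_ne_zero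
  have hm : (m.factorial : ℚ) ≠ 0 := by exact_mod_cast m.factorial_ne_zero
  have key : E (m+1) - E m
      = C ((1:ℚ)/(m+1).factorial) * X ^ (m+1) + C ((1:ℚ)/m.factorial) * X ^ m := by
    rw [E, E, Finset.sum_range_succ, map_ofNat C 2]; ring
  rw [← smul_sub, key, smul_add, smul_eq_C_mul, smul_eq_C_mul, ← mul_assoc, ← mul_assoc,
    ← C_mul, ← C_mul]
  have h1 : ((m+1).factorial:ℚ) * (1/(m+1).factorial) = 1 := by field_simp
  have h2 : ((m+1).factorial:ℚ) * ((1:ℚ)/m.factorial) = (m:ℚ)+1 := by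
    rw [Nat.factorial_succ]; push_cast; field_simp
  rw [h1, h2]
  simp only [C_1]
  ring

lemma f_eq (n : ℕ) (hn : 0 < n) :
    (n.factorial : ℚ) • E n
      = X ^ n + ∑ i ∈ Finset.range n, C (2 * (n.factorial : ℚ) / i.factorial) * X ^ i := by
  have hne : (n.factorial : ℚ) ≠ 0 := by exact_mod_cast n.factorial_ne_zero
  rw [E, smul_add, smul_eq_C_mul, smul_eq_C_mul, ← mul_assoc, ← C_mul]
  congr 1
  · rw [mul_one_div, div_self hne, C_1, one_mul]
  · rw [← mul_assoc, ← C_mul, Finset.mul_sum]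
    refine Finset.sum_congr rfl fun i _ => ?_
    rw [← mul_assoc, ← C_mul]
    congr 1
    ring
lemma derivative_f (n : ℕ) (hn : 0 < n) :
    derivative ((n.factorial : ℚ) • E n)
      = (n.factorial : ℚ) • E n - X ^ (n-1) * (X + C (n:ℚ)) := by
  obtain ⟨m, rfl⟩ := Nat.exists_eq_succ_of_ne_zero hn.ne'
  rw [derivative_smul, E_derivative m]
  have h := E_sub m
  simp only [Nat.succ_sub_one]
  push_cast at h ⊢
  linear_combination -h


/-- For every positive integer `n`, the discriminant of the monic polynomial
`n!·𝔈ₙ(x)` over `ℚ` equals `(-1)^{n(n-1)/2} · 2^{n-1} · (n!)ⁿ · 𝔈ₙ(-n)`. -/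
theorem discriminant_factorial_smul_E (n : ℕ) (hn : 0 < n) :
    discC ((n.factorial : ℚ) • E n) =
      (-1) ^ (n * (n - 1) / 2) * 2 ^ (n - 1) * (n.factorial : ℂ) ^ n *
        (((E n).eval (-(n : ℚ)) : ℚ) : ℂ) := by
  classical
  set f : ℚ[X] := (n.factorial : ℚ) • E n with hf
  have hmon : f.Monic := by
    rw [hf, f_eq n hn]
    exact monic_X_pow_add (sum_deg_lt n hn _)
  have hdeg : f.natDegree = n := by
    have h := sum_deg_lt n hn (fun i => 2 * (n.factorial : ℚ) / i.factorial)
    rw [hf, f_eq n hn]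
    have hd : degree (X ^ n + ∑ i ∈ Finset.range n,
        C (2 * (n.factorial : ℚ) / i.factorial) * X ^ i) = n := by
      rw [degree_add_eq_left_of_degree_lt, degree_X_pow]
      rwa [degree_X_pow]
    exact natDegree_eq_of_degree_eq_some hd
  set Fc : Polynomial ℂ := f.map (algebraMap ℚ ℂ) with hFc
  have hmonc : Fc.Monic := hmon.map _
  have hsplits : Splits Fc := IsAlgClosed.splits Fc
  have hcard : Multiset.card Fc.roots = n := by
    rw [← hsplits.natDegree_eq_card_roots, hFc, natDegree_map, hdeg]
  set l : List ℂ := Fc.roots.toList with hl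
  have hlen : l.length = n := by rw [hl, Multiset.length_toList, hcard]
  have hFceq : Fc = ∏ i ∈ Finset.range n, (X - C (l.getD i 0)) := by
    conv_lhs => rw [(IsAlgClosed.splits Fc).eq_prod_roots_of_monic hmonc]
    rw [← Multiset.coe_toList Fc.roots, Multiset.map_coe, Multiset.prod_coe, ← hl,
      list_prod_map, hlen]
  have hroot : ∀ i ∈ Finset.range n, Fc.eval (l.getD i 0) = 0 := by
    intro i hi
    have hilen : i < l.length := by rw [hlen]; exact Finset.mem_range.mp hi
    have hmem : l.getD i 0 ∈ Fc.roots := by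
      rw [← Multiset.mem_toList, ← hl, List.getD_eq_getElem l 0 hilen]
      exact List.getElem_mem hilen
    exact isRoot_of_mem_roots hmem
  have hderC : derivative Fc = Fc - X ^ (n-1) * (X + C (n:ℂ)) := by
    rw [hFc, derivative_map, derivative_f n hn, Polynomial.map_sub, Polynomial.map_mul,
      Polynomial.map_pow, map_X, Polynomial.map_add, map_X, map_C, map_natCast]
  have hevald : ∀ i ∈ Finset.range n, (derivative Fc).eval (l.getD i 0)
      = -((l.getD i 0) ^ (n-1) * (l.getD i 0 + n)) := by
    intro i hi
    rw [hderC, eval_sub, hroot i hi, eval_mul, eval_pow, eval_add, eval_X, eval_C]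
    ring
  have hevald2 : ∀ i ∈ Finset.range n, (derivative Fc).eval (l.getD i 0)
      = ∏ j ∈ (Finset.range n).erase i, (l.getD i 0 - l.getD j 0) := by
    intro i hi
    rw [hFceq]
    exact eval_derivative_prod_X_sub n (fun j => l.getD j 0) hi
  -- evaluations of f
  have hE0 : (E n).eval 0 = 2 := by
    rw [E]
    simp [eval_finset_sum, zero_pow_eq, hn.ne', Finset.sum_ite_eq', hn]
  have hFc0 : Fc.eval 0 = 2 * (n.factorial : ℂ) := by
    have hfe : f.eval 0 = 2 * (n.factorial:ℚ) := by
      rw [hf, eval_smul, hE0, smul_eq_mul]; ring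
    rw [hFc, eval_map, Polynomial.eval₂_at_zero, Polynomial.coeff_zero_eq_eval_zero, hfe,
      eq_ratCast]
    push_cast
    ring
  have hFcn : Fc.eval (-(n:ℂ)) = (n.factorial : ℂ) * (((E n).eval (-(n:ℚ)) : ℚ) : ℂ) := by
    have hfe : f.eval (-(n:ℚ)) = (n.factorial:ℚ) * (E n).eval (-(n:ℚ)) := by
      rw [hf, eval_smul, smul_eq_mul]
    rw [hFc, eval_map, show (-(n:ℂ)) = algebraMap ℚ ℂ (-(n:ℚ)) by simp,
      Polynomial.eval₂_at_apply, hfe, eq_ratCast]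
    push_cast
    ring
  -- products of roots
  have hprod : ∏ i ∈ Finset.range n, l.getD i 0 = (-1)^n * (2 * (n.factorial : ℂ)) := by
    have h1 : Fc.eval 0 = ∏ i ∈ Finset.range n, (0 - l.getD i 0) := by
      rw [hFceq, eval_prod]; simp
    have h2 : ∏ i ∈ Finset.range n, (0 - l.getD i 0)
        = (-1)^n * ∏ i ∈ Finset.range n, l.getD i 0 := by
      calc ∏ i ∈ Finset.range n, (0 - l.getD i 0)
          = ∏ i ∈ Finset.range n, ((-1) * l.getD i 0) :=
            Finset.prod_congr rfl fun x _ => by ring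
        _ = (∏ _i ∈ Finset.range n, (-1:ℂ)) * ∏ i ∈ Finset.range n, l.getD i 0 :=
            Finset.prod_mul_distrib
        _ = _ := by rw [Finset.prod_const, Finset.card_range]
    have h3 := h1.symm.trans hFc0
    rw [h2] at h3
    have hsq : ((-1:ℂ)^n) * ((-1:ℂ)^n) = 1 := by
      rw [← pow_add]; exact Even.neg_one_pow ⟨n, rfl⟩
    calc ∏ i ∈ Finset.range n, l.getD i 0
        = ((-1:ℂ)^n * (-1:ℂ)^n) * ∏ i ∈ Finset.range n, l.getD i 0 := by rw [hsq, one_mul]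
      _ = (-1:ℂ)^n * ((-1:ℂ)^n * ∏ i ∈ Finset.range n, l.getD i 0) := by ring
      _ = (-1)^n * (2 * (n.factorial : ℂ)) := by rw [h3]
  have hprodn : ∏ i ∈ Finset.range n, (l.getD i 0 + n)
      = (-1)^n * ((n.factorial : ℂ) * (((E n).eval (-(n:ℚ)) : ℚ) : ℂ)) := by
    have h1 : Fc.eval (-(n:ℂ)) = ∏ i ∈ Finset.range n, (-(n:ℂ) - l.getD i 0) := by
      rw [hFceq, eval_prod]; simp
    have h2 : ∏ i ∈ Finset.range n, (-(n:ℂ) - l.getD i 0)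
        = (-1)^n * ∏ i ∈ Finset.range n, (l.getD i 0 + n) := by
      calc ∏ i ∈ Finset.range n, (-(n:ℂ) - l.getD i 0)
          = ∏ i ∈ Finset.range n, ((-1) * (l.getD i 0 + n)) :=
            Finset.prod_congr rfl fun x _ => by ring
        _ = (∏ _i ∈ Finset.range n, (-1:ℂ)) * ∏ i ∈ Finset.range n, (l.getD i 0 + n) :=
            Finset.prod_mul_distrib
        _ = _ := by rw [Finset.prod_const, Finset.card_range]
    have h3 := h1.symm.trans hFcn
    rw [h2] at h3
    have hsq : ((-1:ℂ)^n) * ((-1:ℂ)^n) = 1 := by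
      rw [← pow_add]; exact Even.neg_one_pow ⟨n, rfl⟩
    calc ∏ i ∈ Finset.range n, (l.getD i 0 + n)
        = ((-1:ℂ)^n * (-1:ℂ)^n) * ∏ i ∈ Finset.range n, (l.getD i 0 + n) := by
          rw [hsq, one_mul]
      _ = (-1:ℂ)^n * ((-1:ℂ)^n * ∏ i ∈ Finset.range n, (l.getD i 0 + n)) := by ring
      _ = _ := by rw [h3]
  -- unfolding discC
  have hdisc : discC f = ∏ ij ∈ (Finset.range n ×ˢ Finset.range n).filter
      (fun ij => ij.1 < ij.2), (l.getD ij.1 0 - l.getD ij.2 0) ^ 2 := by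
    rw [discC]
    simp only [← hFc, ← hl, hlen]
  -- the discriminant as product of derivative values
  have hsqN : ((-1:ℂ)^(n*(n-1)/2)) * ((-1:ℂ)^(n*(n-1)/2)) = 1 := by
    rw [← pow_add]; exact Even.neg_one_pow ⟨_, rfl⟩
  have key : discC f = (-1)^(n*(n-1)/2) *
      ∏ i ∈ Finset.range n, (derivative Fc).eval (l.getD i 0) := by
    rw [hdisc]
    have h1 := offdiag_split n (fun i => l.getD i 0)
    have h2 := offdiag_eq n (fun i => l.getD i 0)
    rw [Finset.prod_congr rfl hevald2]
    rw [← h2, h1]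
    calc ∏ ij ∈ (Finset.range n ×ˢ Finset.range n).filter (fun ij => ij.1 < ij.2),
          (l.getD ij.1 0 - l.getD ij.2 0) ^ 2
        = (((-1:ℂ)^(n*(n-1)/2)) * ((-1:ℂ)^(n*(n-1)/2))) *
          ∏ ij ∈ (Finset.range n ×ˢ Finset.range n).filter (fun ij => ij.1 < ij.2),
          (l.getD ij.1 0 - l.getD ij.2 0) ^ 2 := by rw [hsqN, one_mul]
      _ = _ := by ring
  -- compute the product of derivative values
  have hprodder : ∏ i ∈ Finset.range n, (derivative Fc).eval (l.getD i 0)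
      = (-1)^n * (∏ i ∈ Finset.range n, l.getD i 0)^(n-1) *
        ∏ i ∈ Finset.range n, (l.getD i 0 + n) := by
    rw [Finset.prod_congr rfl hevald]
    calc ∏ i ∈ Finset.range n, -(l.getD i 0 ^ (n-1) * (l.getD i 0 + (n:ℂ)))
        = ∏ i ∈ Finset.range n, ((-1) * (l.getD i 0 ^ (n-1) * (l.getD i 0 + (n:ℂ)))) :=
          Finset.prod_congr rfl fun x _ => by ring
      _ = (∏ _i ∈ Finset.range n, (-1:ℂ)) *
          ∏ i ∈ Finset.range n, (l.getD i 0 ^ (n-1) * (l.getD i 0 + (n:ℂ))) :=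
          Finset.prod_mul_distrib
      _ = (-1)^n * ((∏ i ∈ Finset.range n, l.getD i 0 ^ (n-1)) *
          ∏ i ∈ Finset.range n, (l.getD i 0 + (n:ℂ))) := by
          rw [Finset.prod_const, Finset.card_range, Finset.prod_mul_distrib]
      _ = _ := by rw [Finset.prod_pow]; ring
  -- final assembly
  set e : ℂ := (((E n).eval (-(n : ℚ)) : ℚ) : ℂ) with he
  rw [key, hprodder, hprod, hprodn]
  obtain ⟨m, rfl⟩ := Nat.exists_eq_succ_of_ne_zero hn.ne'
  simp only [Nat.succ_eq_add_one, Nat.add_sub_cancel]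
  have hs : ((-1:ℂ))^(m+1) * (((-1:ℂ))^(m+1))^m * ((-1:ℂ))^(m+1) = 1 := by
    rw [← pow_mul, ← pow_add, ← pow_add,
      show (m+1) + (m+1)*m + (m+1) = (m+1)*(m+2) by ring]
    refine Even.neg_one_pow ?_
    rw [show (m+1)*(m+2) = (m+1)*((m+1)+1) from by ring]
    exact Nat.even_mul_succ_self (m+1)
  have hgoal : ∀ A B : ℂ, (-1:ℂ)^(m+1) * ((-1:ℂ)^(m+1) * A)^m * ((-1:ℂ)^(m+1) * B)
      = A^m * B := by
    intro A B
    rw [mul_pow]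
    calc (-1:ℂ)^(m+1) * (((-1:ℂ)^(m+1))^m * A^m) * ((-1:ℂ)^(m+1) * B)
        = ((-1:ℂ)^(m+1) * ((-1:ℂ)^(m+1))^m * ((-1:ℂ))^(m+1)) * (A^m * B) := by ring
      _ = A^m * B := by rw [hs, one_mul]
  rw [show ((-1:ℂ))^((m+1)*m/2) * ((-1:ℂ)^(m+1) * ((-1:ℂ)^(m+1) * (2*((m+1).factorial:ℂ)))^m *
      ((-1:ℂ)^(m+1) * (((m+1).factorial:ℂ) * e)))
      = ((-1:ℂ))^((m+1)*m/2) * ((2*((m+1).factorial:ℂ))^m * (((m+1).factorial:ℂ) * e)) from by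
    rw [← hgoal (2*((m+1).factorial:ℂ)) (((m+1).factorial:ℂ) * e)]]
  rw [mul_pow]
  ring
end

section
/- Let n ≥ 2 and let f(x) = Σ_{i=0}^{n} c_i x^i/i! where c_i ∈ ℤ for 1 ≤ i ≤ n-1, c_n = 1, and c_0 = ±2^k for a nonnegative integer k. Let A(x) ∈ ℤ[x] be a monic irreducible factor of n!·f(x) of degree m with 1 ≤ m ≤ n/2. Then every odd prime p dividing the constant coefficient A(0) satisfies p ≤ m. -/
open Polynomial Finset
open scoped NumberField
lemma aux_ofDigits_zero (b : ℕ) (L : List ℕ) (h : ∀ d ∈ L, d = 0) :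
    Nat.ofDigits b L = 0 := by
  induction L with
  | nil => simp [Nat.ofDigits]
  | cons d L ih =>
    rw [Nat.ofDigits_cons, ih (fun x hx => h x (List.mem_cons_of_mem d hx)),
      h d List.mem_cons_self]
    simp

lemma aux_digitsum_pos (p i : ℕ) (hi : i ≠ 0) : 0 < (p.digits i).sum := by
  by_contra hs
  push_neg at hs
  have hsum : (p.digits i).sum = 0 := Nat.le_zero.mp hs
  have hall : ∀ d ∈ p.digits i, d = 0 := by
    intro d hd
    exact by by_contra hd0; have := List.single_le_sum (fun x _ => Nat.zero_le x) d hd; omega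
  have := Nat.ofDigits_digits p i
  rw [aux_ofDigits_zero p _ hall] at this
  exact hi this.symm

lemma aux_pow_le {δ : (WithZero (Multiplicative ℤ))} (hδ0 : δ ≠ 0) (hδ1 : δ < 1)
    {a b : ℕ} (h : δ ^ a ≤ δ ^ b) : b ≤ a := by
  obtain ⟨x, rfl⟩ := WithZero.ne_zero_iff_exists.mp hδ0
  rw [← WithZero.coe_pow, ← WithZero.coe_pow, WithZero.coe_le_coe] at h
  rw [← WithZero.coe_one, WithZero.coe_lt_coe] at hδ1
  have hd : Multiplicative.toAdd x < 0 := hδ1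
  have h2 : (a : ℤ) * Multiplicative.toAdd x ≤ (b : ℤ) * Multiplicative.toAdd x := by
    have := Multiplicative.toAdd_le.mpr h
    simpa [toAdd_pow, nsmul_eq_mul] using this
  by_contra hab
  push_neg at hab
  have : (a : ℤ) < (b : ℤ) := by exact_mod_cast hab
  nlinarith


/-- Let `n ≥ 2` and `f(x) = ∑_{i=0}^n cᵢ xⁱ/i!` with `cᵢ ∈ ℤ`, `cₙ = 1` and
`c₀ = ±2ᵏ` for a nonnegative integer `k`, so that
`n!·f(x) = ∑_{i=0}^n cᵢ (n!/i!) xⁱ` is a monic polynomial in `ℤ[x]`.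
If `A ∈ ℤ[x]` is a monic irreducible factor of `n!·f(x)` of degree `m` with
`1 ≤ m ≤ n/2`, then every odd prime `p` dividing the constant coefficient `A(0)`
satisfies `p ≤ m`. -/
theorem odd_prime_divisor_of_constant_coeff_le_degree (n : ℕ) (hn : 2 ≤ n)
    (c : ℕ → ℤ) (k : ℕ) (hcn : c n = 1)
    (hc0 : c 0 = 2 ^ k ∨ c 0 = -(2 ^ k))
    (F : Polynomial ℤ)
    (hF : F = ∑ i ∈ Finset.range (n + 1),
      C (c i * (n.factorial / i.factorial : ℕ)) * X ^ i)
    (A : Polynomial ℤ) (hA : A.Monic) (hAirr : Irreducible A) (hAdvd : A ∣ F)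
    (m : ℕ) (hm : A.natDegree = m) (hm1 : 1 ≤ m) (hm2 : 2 * m ≤ n)
    (p : ℕ) (hp : p.Prime) (hpodd : Odd p) (hpdvd : (p : ℤ) ∣ A.coeff 0) :
    p ≤ m := by
  by_contra hcon
  push_neg at hcon
  haveI : Fact p.Prime := ⟨hp⟩
  obtain ⟨B, hB⟩ := hAdvd
  -- the splitting field
  set q : Polynomial ℚ := A.map (algebraMap ℤ ℚ) with hq
  set K := q.SplittingField with hK
  haveI : NumberField K := ⟨⟩
  haveI : DecidableEq K := Classical.decEq K
  set R := 𝓞 K with hR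
  -- a maximal ideal over p
  have hinj : Function.Injective (algebraMap ℤ R) := by
    have h1 : Function.Injective (algebraMap ℤ K) := by
      intro a b hab
      rwa [eq_intCast, eq_intCast, Int.cast_inj] at hab
    rw [IsScalarTower.algebraMap_eq ℤ R K, RingHom.coe_comp] at h1
    exact Function.Injective.of_comp h1
  have hpmax : (Ideal.span {(p : ℤ)}).IsMaximal :=
    PrincipalIdealRing.isMaximal_of_irreducible (Nat.prime_iff_prime_int.mp hp).irreducible
  obtain ⟨Q, hQmax, hQcomap⟩ :=
    Ideal.exists_ideal_over_maximal_of_isIntegral (S := R) (Ideal.span {(p : ℤ)})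
      (by rw [(RingHom.injective_iff_ker_eq_bot _).mp hinj]; exact bot_le)
  have hmemQ : ∀ t : ℤ, algebraMap ℤ R t ∈ Q ↔ (p : ℤ) ∣ t := by
    intro t
    rw [← Ideal.mem_comap, hQcomap, Ideal.mem_span_singleton]
  haveI : Q.IsPrime := hQmax.isPrime
  have hQbot : Q ≠ ⊥ := by
    intro h
    have hpQ : algebraMap ℤ R p ∈ Q := (hmemQ p).mpr dvd_rfl
    rw [h, Ideal.mem_bot] at hpQ
    have : (p : ℤ) = 0 := hinj (by simpa using hpQ)
    exact_mod_cast hp.ne_zero (by exact_mod_cast this)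
  set P : IsDedekindDomain.HeightOneSpectrum R := ⟨Q, hQmax.isPrime, hQbot⟩ with hP
  set v : Valuation K (WithZero (Multiplicative ℤ)) := P.valuation K with hv
  set w : ℤ → WithZero (Multiplicative ℤ) := fun t => v (algebraMap ℤ K t) with hw
  -- basic properties of w
  have hw_mul : ∀ s t : ℤ, w (s * t) = w s * w t := by
    intro s t; simp only [hw, map_mul]
  have hw_le1 : ∀ t : ℤ, w t ≤ 1 := by
    intro t
    simp only [hw, IsScalarTower.algebraMap_apply ℤ R K]
    exact P.valuation_le_one (K := K) _
  have hw_lt1 : ∀ t : ℤ, (w t < 1 ↔ (p : ℤ) ∣ t) := by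
    intro t
    simp only [hw, IsScalarTower.algebraMap_apply ℤ R K]
    rw [P.valuation_lt_one_iff_dvd (K := K), Ideal.dvd_span_singleton]
    exact hmemQ t
  have hw_ne : ∀ t : ℤ, t ≠ 0 → w t ≠ 0 := by
    intro t ht
    simp only [hw]
    rw [Valuation.ne_zero_iff]
    intro h
    rw [IsScalarTower.algebraMap_apply ℤ R K] at h
    have h2 : algebraMap ℤ R t = 0 := by
      have := (IsFractionRing.injective R K)
      exact this (by simpa using h)
    exact ht (hinj (by simpa using h2))
  have hw_one : ∀ t : ℤ, ¬ ((p : ℤ) ∣ t) → w t = 1 := by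
    intro t ht
    rcases (hw_le1 t).lt_or_eq with h | h
    · exact absurd ((hw_lt1 t).mp h) ht
    · exact h
  -- the mapped polynomial and its roots
  set Amap : Polynomial K := A.map (algebraMap ℤ K) with hAm
  have hAmmonic : Amap.Monic := hA.map _
  have hsplit : Splits Amap := by
    have halg : algebraMap ℤ K = (algebraMap ℚ K).comp (algebraMap ℤ ℚ) :=
      (IsScalarTower.algebraMap_eq ℤ ℚ K)
    rw [hAm, halg, ← Polynomial.map_map]
    exact SplittingField.splits q
  have hcard : Amap.roots.card = m := by
    rw [(Polynomial.splits_iff_card_roots).mp hsplit, hAm, hA.natDegree_map, hm]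
  -- pick a root of minimal valuation
  have hrne : Amap.roots ≠ 0 := by
    intro h
    rw [h] at hcard
    simp at hcard
    omega
  have htfne : Amap.roots.toFinset.Nonempty := by
    rw [Multiset.toFinset_nonempty]
    exact hrne
  obtain ⟨α, hαmem, hαmin⟩ := Finset.exists_min_image Amap.roots.toFinset v htfne
  rw [Multiset.mem_toFinset] at hαmem
  have hαroot : Amap.eval α = 0 := by
    exact (Polynomial.mem_roots (hAmmonic.ne_zero)).mp hαmem
  -- key inequality 1
  have hA0 : Amap.coeff 0 = algebraMap ℤ K (A.coeff 0) := by
    rw [hAm, Polynomial.coeff_map]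
  have h1 : (v α) ^ m ≤ w (A.coeff 0) := by
    have hprod : Amap.coeff 0 = (-1) ^ Amap.natDegree * Amap.roots.prod :=
      hsplit.coeff_zero_eq_prod_roots_of_monic hAmmonic
    have hvprod : w (A.coeff 0) = (Amap.roots.map v).prod := by
      rw [hw]
      simp only
      rw [← hA0, hprod, map_mul, map_multiset_prod]
      have : v ((-1 : K) ^ Amap.natDegree) = 1 := by
        rw [map_pow]
        have : v (-1 : K) = 1 := by
          rw [show (-1 : K) = -(1:K) by ring, Valuation.map_neg, Valuation.map_one]
        rw [this, one_pow]
      rw [this, one_mul]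
    rw [hvprod]
    have : (v α) ^ (Amap.roots.map v).card ≤ (Amap.roots.map v).prod := by
      apply Multiset.pow_card_le_prod
      intro x hx
      obtain ⟨r, hr, rfl⟩ := Multiset.mem_map.mp hx
      exact hαmin r (Multiset.mem_toFinset.mpr hr)
    rwa [Multiset.card_map, hcard] at this
  have h1' : (v α) ^ m ≤ w p := by
    obtain ⟨t, ht⟩ := hpdvd
    calc (v α) ^ m ≤ w (A.coeff 0) := h1
    _ = w p * w t := by rw [ht, hw_mul]
    _ ≤ w p * 1 := mul_le_mul_right (hw_le1 t) _
    _ = w p := mul_one _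
  -- the evaluation of F at α
  set a : ℕ → ℤ := fun i => c i * ((n.factorial / i.factorial : ℕ) : ℤ) with ha
  set f : ℕ → K := fun i => algebraMap ℤ K (a i) * α ^ i with hf2
  have hγ : ∀ i : ℕ, v (f i) = w (a i) * (v α) ^ i := by
    intro i
    simp only [hf2, map_mul, map_pow, hw]
  have hFval : ∑ i ∈ range (n + 1), f i = 0 := by
    have h0 : eval α (F.map (algebraMap ℤ K)) = 0 := by
      rw [hB, Polynomial.map_mul, eval_mul, ← hAm, hαroot, zero_mul]
    rw [hF, Polynomial.map_sum] at h0
    simp only [Polynomial.map_mul, Polynomial.map_C, Polynomial.map_pow, Polynomial.map_X,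
      eval_finset_sum, eval_mul, eval_pow, eval_C, eval_X] at h0
    simpa [hf2, ha] using h0
  have ha0 : a 0 = c 0 * (n.factorial : ℤ) := by
    simp [ha, Nat.factorial_zero]
  have hc0ne : c 0 ≠ 0 := by
    have h2 : (0:ℤ) < 2 ^ k := by positivity
    rcases hc0 with h | h <;> rw [h] <;> omega
  have ha0ne : a 0 ≠ 0 := by
    rw [ha0]
    exact mul_ne_zero hc0ne (by exact_mod_cast Nat.factorial_ne_zero n)
  have hvf0 : v (f 0) ≠ 0 := by
    rw [hγ 0, pow_zero, mul_one]
    exact hw_ne _ ha0ne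
  -- extract an index i with large term
  have hex : ∃ i ∈ (range (n + 1)).erase 0, v (f 0) ≤ v (f i) := by
    by_contra hno
    push_neg at hno
    have hlt := Valuation.map_sum_lt v hvf0 hno
    have hsum' : ∑ x ∈ (range (n + 1)).erase 0, f x = -(f 0) := by
      have := Finset.add_sum_erase (range (n + 1)) f
        (show (0:ℕ) ∈ range (n + 1) from Finset.mem_range.mpr (Nat.succ_pos n))
      rw [hFval] at this
      exact eq_neg_of_add_eq_zero_right this
    rw [hsum', Valuation.map_neg] at hlt
    exact lt_irrefl _ hlt
  obtain ⟨i, hiS, hile⟩ := hex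
  have hi0 : i ≠ 0 := (Finset.mem_erase.mp hiS).1
  have hin : i ≤ n := by
    have := Finset.mem_range.mp (Finset.mem_erase.mp hiS).2
    omega
  -- w (c 0) = 1
  have hpc0 : ¬ ((p : ℤ) ∣ c 0) := by
    intro hdvd
    have h2 : (p : ℤ) ∣ 2 ^ k := by
      rcases hc0 with h | h
      · rwa [h] at hdvd
      · rw [h] at hdvd
        exact (dvd_neg).mp hdvd
    have h3 : (p : ℤ) ∣ 2 := (Nat.prime_iff_prime_int.mp hp).dvd_of_dvd_pow h2
    have h4 : p ∣ 2 := by exact_mod_cast h3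
    have : p = 2 := (Nat.prime_dvd_prime_iff_eq hp Nat.prime_two).mp h4
    rw [this] at hpodd
    exact (by decide : ¬ Odd 2) hpodd
  -- key2 : w i! ≤ γ ^ i
  have hfacdvd : i.factorial ∣ n.factorial := Nat.factorial_dvd_factorial hin
  have hquotne : ((n.factorial / i.factorial : ℕ) : ℤ) ≠ 0 := by
    have : 0 < n.factorial / i.factorial :=
      Nat.div_pos (Nat.le_of_dvd (Nat.factorial_pos n) hfacdvd) (Nat.factorial_pos i)
    exact_mod_cast this.ne'
  have hfact : (n.factorial : ℤ) = (i.factorial : ℤ) * ((n.factorial / i.factorial : ℕ) : ℤ) := by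
    exact_mod_cast (Nat.mul_div_cancel' hfacdvd).symm
  have key2 : w (i.factorial : ℤ) ≤ (v α) ^ i := by
    have hstep : w (i.factorial : ℤ) * w ((n.factorial / i.factorial : ℕ) : ℤ) ≤
        ((v α) ^ i) * w ((n.factorial / i.factorial : ℕ) : ℤ) := by
      calc w (i.factorial : ℤ) * w ((n.factorial / i.factorial : ℕ) : ℤ)
          = w (n.factorial : ℤ) := by rw [← hw_mul, ← hfact]
        _ = w (a 0) := by rw [ha0, hw_mul, hw_one _ hpc0, one_mul]
        _ = v (f 0) := by rw [hγ 0, pow_zero, mul_one]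
        _ ≤ v (f i) := hile
        _ = w (a i) * (v α) ^ i := hγ i
        _ = w (c i) * w ((n.factorial / i.factorial : ℕ) : ℤ) * (v α) ^ i := by
            have : a i = c i * ((n.factorial / i.factorial : ℕ) : ℤ) := rfl
            rw [this, hw_mul]
        _ ≤ 1 * w ((n.factorial / i.factorial : ℕ) : ℤ) * (v α) ^ i := by
            exact mul_le_mul_left (mul_le_mul_left (hw_le1 _) _) _
        _ = ((v α) ^ i) * w ((n.factorial / i.factorial : ℕ) : ℤ) := by
            rw [one_mul, mul_comm]
    have hz := hw_ne _ hquotne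
    have := mul_le_mul_left hstep (w ((n.factorial / i.factorial : ℕ) : ℤ))⁻¹
    rwa [mul_assoc, mul_assoc, mul_inv_cancel₀ hz, mul_one, mul_one] at this
  -- key3 : w i! = (w p) ^ s
  set s : ℕ := (i.factorial).factorization p with hs
  set u : ℕ := i.factorial / p ^ s with hu
  have hord : p ^ s * u = i.factorial := Nat.ordProj_mul_ordCompl_eq_self i.factorial p
  have hundvd : ¬ p ∣ u := Nat.not_dvd_ordCompl hp (Nat.factorial_ne_zero i)
  have hw_pow : ∀ (t : ℤ) (j : ℕ), w (t ^ j) = (w t) ^ j := by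
    intro t j
    simp only [hw, map_pow]
  have key3 : w (i.factorial : ℤ) = (w p) ^ s := by
    have hcast : (i.factorial : ℤ) = (p : ℤ) ^ s * (u : ℤ) := by
      rw [← hord]
      push_cast
      ring
    rw [hcast, hw_mul, hw_pow]
    rw [hw_one (u : ℤ) (by exact_mod_cast hundvd), mul_one]
  -- final contradiction
  have hδ0 : w p ≠ 0 := hw_ne _ (by exact_mod_cast hp.ne_zero)
  have hδ1 : w p < 1 := (hw_lt1 p).mpr dvd_rfl
  have hfin2 : (w p) ^ (s * m) ≤ (w p) ^ i := by
    calc (w p) ^ (s * m) = ((w p) ^ s) ^ m := by rw [pow_mul]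
      _ ≤ ((v α) ^ i) ^ m := pow_le_pow_left' (key3 ▸ key2) m
      _ = ((v α) ^ m) ^ i := by rw [← pow_mul, mul_comm, pow_mul]
      _ ≤ (w p) ^ i := pow_le_pow_left' h1' i
  have hilesm : i ≤ s * m := aux_pow_le hδ0 hδ1 hfin2
  have hleg : (p - 1) * padicValNat p (i.factorial) = i - (p.digits i).sum :=
    sub_one_mul_padicValNat_factorial i
  have hsval : padicValNat p (i.factorial) = s := (Nat.factorization_def _ hp).symm
  rw [hsval] at hleg
  have hds : 0 < (p.digits i).sum := aux_digitsum_pos p i hi0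
  have h7 : i ≤ (p - 1) * s := by
    refine le_trans hilesm ?_
    rw [mul_comm]
    exact Nat.mul_le_mul_right s (by omega)
  omega
end

section
/- Let n be an even positive integer and let p be an odd prime dividing n-1. Then the p-adic valuation of 𝔈_n(-n) equals -v_p(n!), i.e. v_p(𝔈_n(-n)) = -v_p((n-1)!) = -v_p(n!). -/
open Polynomial Finset

lemma hT_aux (n i : ℕ) (hi : i ≤ n) :
    (i.factorial : ℚ) * ∏ j ∈ Finset.Ico (i+1) (n+1), (j:ℚ) = (n.factorial : ℚ) := by
  have h : i.factorial * ∏ j ∈ Finset.Ico (i+1) (n+1), j = n.factorial := by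
    rw [← Finset.prod_Ico_id_eq_factorial i, ← Finset.prod_Ico_id_eq_factorial n]
    exact Finset.prod_Ico_consecutive _ (Nat.le_add_left 1 i) (by omega)
  have := congrArg (Nat.cast : ℕ → ℚ) h
  push_cast at this
  exact this

lemma E_eval (n : ℕ) :
    (E n).eval (-(n : ℚ)) =
      ((2 * (∑ i ∈ Finset.range (n+1), (-(n:ℤ))^i * ∏ j ∈ Finset.Ico (i+1) (n+1), (j:ℤ))
        - (-(n:ℤ))^n : ℤ) : ℚ) / n.factorial := by
  have hfac : (n.factorial : ℚ) ≠ 0 := by exact_mod_cast n.factorial_ne_zero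
  rw [eq_div_iff hfac]
  simp only [E, eval_add, eval_mul, eval_C, eval_pow, eval_X, eval_finset_sum]
  rw [Finset.sum_range_succ]
  push_cast
  simp only [Finset.Ico_self, Finset.prod_empty, mul_one]
  have h1 : (1 / (n.factorial:ℚ) * (-(n:ℚ))^n + 2 * ∑ x ∈ Finset.range n, 1/(x.factorial:ℚ) * (-(n:ℚ))^x) * n.factorial
      = (-(n:ℚ))^n + 2 * ((∑ x ∈ Finset.range n, 1/(x.factorial:ℚ) * (-(n:ℚ))^x) * n.factorial) := by
    field_simp
  have hsum : (∑ x ∈ Finset.range n, 1/(x.factorial:ℚ) * (-(n:ℚ))^x) * n.factorial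
      = ∑ x ∈ Finset.range n, (-(n:ℚ))^x * ∏ j ∈ Finset.Ico (x+1) (n+1), (j:ℚ) := by
    rw [Finset.sum_mul]
    refine Finset.sum_congr rfl fun k hk => ?_
    have hk' := hT_aux n k (by simp at hk; omega)
    have hfk : (k.factorial : ℚ) ≠ 0 := by exact_mod_cast k.factorial_ne_zero
    field_simp
    rw [← hk']
    ring
  rw [h1, hsum]
  ring

/-- Let `n` be an even positive integer and `p` an odd prime dividing `n - 1`.
Then `v_p(𝔈ₙ(-n)) = -v_p((n-1)!) = -v_p(n!)`, where `v_p` is the `p`-adic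
valuation extended to `ℚ`. -/
theorem padicValRat_E_eval_neg_n (n p : ℕ) (hn : 0 < n) (hne : Even n)
    (hp : p.Prime) (hpodd : Odd p) (hdvd : p ∣ n - 1) :
    padicValRat p ((E n).eval (-(n : ℚ))) = -(padicValNat p (n - 1).factorial : ℤ) ∧
    padicValRat p ((E n).eval (-(n : ℚ))) = -(padicValNat p n.factorial : ℤ) := by
  haveI : Fact p.Prime := ⟨hp⟩
  obtain ⟨m, rfl⟩ : ∃ m, n = m + 1 := ⟨n - 1, (Nat.succ_pred_eq_of_pos hn).symm⟩
  have hm : p ∣ m := by simpa using hdvd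
  have hmpos : m ≠ 0 := by
    rintro rfl
    simp at hne
  set A : ℤ := 2 * (∑ i ∈ Finset.range (m+1+1), (-((m+1 : ℕ):ℤ))^i *
      ∏ j ∈ Finset.Ico (i+1) (m+1+1), (j:ℤ)) - (-((m+1 : ℕ):ℤ))^(m+1) with hA
  -- mod p computation
  have hmzero : ((m : ZMod p)) = 0 := (ZMod.natCast_eq_zero_iff m p).2 hm
  have hnone : ((m+1 : ℕ) : ZMod p) = 1 := by push_cast [hmzero]; ring
  have hAmod : ((A : ZMod p)) = -1 := by
    rw [hA]
    push_cast
    rw [Finset.sum_range_succ, Finset.sum_range_succ]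
    have hz : ∀ i ∈ Finset.range m,
        (-((m:ZMod p)+1))^i * ∏ j ∈ Finset.Ico (i+1) (m+1+1), (j : ZMod p) = 0 := by
      intro i hi
      simp only [Finset.mem_range] at hi
      have : ∏ j ∈ Finset.Ico (i+1) (m+1+1), (j : ZMod p) = 0 := by
        apply Finset.prod_eq_zero (i := m)
        · simp [Finset.mem_Ico]; omega
        · exact hmzero
      rw [this, mul_zero]
    rw [Finset.sum_eq_zero hz]
    have hmodd : Odd m := by
      rcases Nat.even_or_odd m with h | h
      · exfalso; exact (Nat.even_add_one.mp hne) h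
      · exact h
    simp only [hmzero, Finset.Ico_self, Finset.prod_empty, mul_one, zero_add]
    rw [Nat.Ico_succ_singleton, Finset.prod_singleton]
    rw [hmodd.neg_one_pow, Even.neg_one_pow hmodd.add_one]
    push_cast [hmzero]
    ring
  have hpA : ¬ (p:ℤ) ∣ A := by
    intro h
    have := (ZMod.intCast_zmod_eq_zero_iff_dvd A p).2 h
    rw [hAmod] at this
    exact (neg_ne_zero.mpr (one_ne_zero : (1 : ZMod p) ≠ 0)) this
  have hA0 : A ≠ 0 := fun h => hpA (h ▸ dvd_zero _)
  have hAQ : (A : ℚ) ≠ 0 := by exact_mod_cast hA0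
  have hfacQ : (((m+1).factorial : ℚ)) ≠ 0 := by exact_mod_cast (m+1).factorial_ne_zero
  have heval := E_eval (m+1)
  have hval : padicValRat p ((E (m+1)).eval (-((m+1 : ℕ) : ℚ))) = -(padicValNat p (m+1).factorial : ℤ) := by
    rw [show (((m+1:ℕ)) : ℚ) = ((m+1 : ℕ) : ℚ) from rfl] at heval
    rw [heval, padicValRat.div hAQ hfacQ, padicValRat.of_int, padicValRat.of_nat,
      padicValInt.eq_zero_of_not_dvd hpA]
    simp
  have hpn1 : ¬ p ∣ (m+1) := by
    intro h
    have h1 : p ∣ 1 := by simpa using Nat.dvd_sub h hm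
    exact hp.one_lt.ne' (Nat.dvd_one.mp h1)
  have hfaceq : padicValNat p (m+1).factorial = padicValNat p m.factorial := by
    rw [Nat.factorial_succ, padicValNat.mul (by omega) m.factorial_ne_zero,
      padicValNat.eq_zero_of_not_dvd hpn1, zero_add]
  constructor
  · simpa [hfaceq] using hval
  · exact hval
end

section
/- Let n be a positive integer with n ≡ 1 (mod 4) and suppose n - 2 = p·t where p is an odd prime, t is a positive integer with gcd(p, t) = 1, and p does not divide Σ_{i=1}^{p-1} 2^{p-1-i}·i!. Then the p-adic valuation of the integer n!·𝔈_n(-n) equals 1; in particular, n!·𝔈_n(-n) is not a square of a rational number. -/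
open Polynomial Finset

def Pn (i k : ℕ) : ℕ := ∏ j ∈ Finset.Ioc i k, j

lemma Pn_mul_factorial {i k : ℕ} (h : i ≤ k) : Pn i k * i.factorial = k.factorial := by
  induction k, h using Nat.le_induction with
  | base => simp [Pn]
  | succ k hk ih =>
      simp only [Pn] at ih ⊢
      rw [Finset.prod_Ioc_succ_top hk, Nat.factorial_succ, mul_right_comm, ih]
      ring

lemma step1 (n : ℕ) :
    (n.factorial : ℚ) * (E n).eval (-(n : ℚ)) =
      (((-(n:ℤ))^n + 2 * ∑ i ∈ Finset.range n, (Pn i n : ℤ) * (-(n:ℤ))^i : ℤ) : ℚ) := by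
  have hfac : (n.factorial : ℚ) ≠ 0 := by exact_mod_cast n.factorial_ne_zero
  simp only [E, eval_add, eval_mul, eval_C, eval_pow, eval_X, eval_finset_sum]
  push_cast
  rw [mul_add, Finset.mul_sum, mul_comm ((2:ℚ)) _, ← mul_assoc, Finset.mul_sum,
    mul_one_div_cancel hfac, one_mul, Finset.sum_mul]
  congr 1
  refine Finset.sum_congr rfl fun i hi => ?_
  have h : i ≤ n := le_of_lt (Finset.mem_range.mp hi)
  have h2 : (n.factorial : ℚ) = (Pn i n : ℚ) * i.factorial := by
    exact_mod_cast (Pn_mul_factorial h).symm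
  have hif : (i.factorial : ℚ) ≠ 0 := by exact_mod_cast i.factorial_ne_zero
  rw [h2]
  field_simp

lemma step2' (u : ℕ) (hodd : Odd (u + 1)) :
    (-((u+3:ℕ):ℤ))^(u+3) + 2 * ∑ i ∈ Finset.range (u+3), (Pn i (u+3) : ℤ) * (-((u+3:ℕ):ℤ))^i
      = ((u+1:ℕ):ℤ) * (2 * ((u+3:ℕ):ℤ) * ((u+2:ℕ):ℤ) *
          (∑ i ∈ Finset.range (u+1), (Pn i u : ℤ) * (-((u+3:ℕ):ℤ))^i) - ((u+3:ℕ):ℤ)^(u+2)) := by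
  have h1 : Pn (u+2) (u+3) = u+3 := by
    simp [Pn, Nat.Ioc_succ_singleton]
  have h2 : Pn (u+1) (u+3) = (u+2)*(u+3) := by
    rw [Pn, show u+3 = (u+2)+1 from rfl, Finset.prod_Ioc_succ_top (by omega),
      Nat.Ioc_succ_singleton, Finset.prod_singleton]
  have h3 : Pn u (u+3) = (u+1)*((u+2)*(u+3)) := by
    rw [Pn, show u+3 = (u+2)+1 from rfl, Finset.prod_Ioc_succ_top (by omega),
      show u+2 = (u+1)+1 from rfl, Finset.prod_Ioc_succ_top (by omega),
      Nat.Ioc_succ_singleton, Finset.prod_singleton]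
    ring
  have hsum : ∑ i ∈ Finset.range (u+1), (Pn i (u+3) : ℤ) * (-((u+3:ℕ):ℤ))^i
      = (((u:ℤ)+1)*(((u:ℤ)+2)*((u:ℤ)+3))) * ∑ i ∈ Finset.range (u+1), (Pn i u : ℤ) * (-((u+3:ℕ):ℤ))^i := by
    rw [Finset.mul_sum]
    refine Finset.sum_congr rfl fun i hi => ?_
    have hiu : i ≤ u := by have := Finset.mem_range.mp hi; omega
    have hs : Pn i (u+3) = Pn i u * Pn u (u+3) := (Finset.prod_Ioc_consecutive _ hiu (by omega)).symm
    rw [hs, h3]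
    push_cast
    ring
  have hu3 : Odd (u+3) := by obtain ⟨k, hk⟩ := hodd; exact ⟨k+1, by omega⟩
  have he2 : Even (u+2) := by obtain ⟨k, hk⟩ := hodd; exact ⟨k+1, by omega⟩
  rw [Finset.sum_range_succ, Finset.sum_range_succ, hsum, h1, h2,
    Odd.neg_pow hu3, Odd.neg_pow hodd, Even.neg_pow he2]
  push_cast
  ring

lemma Pn_cast_zmod (p i m : ℕ) : ((Pn i m : ℕ) : ZMod p) = ∏ j ∈ Finset.Ioc i m, (j : ZMod p) := by
  simp [Pn]

lemma Pn_zmod_factorial (p : ℕ) (hp1 : 1 ≤ p) (r : ℕ) (hr : r < p) :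
    ((Pn r (p-1) : ℕ) : ZMod p) = (-1)^(p-1-r) * ((p-1-r).factorial : ZMod p) := by
  have hIoc : Finset.Ioc r (p-1) = Finset.Ico (r+1) p := by
    rw [← Finset.Icc_add_one_left_eq_Ioc, ← Finset.Ico_add_one_right_eq_Icc, show (p-1)+1 = p by omega]
  rw [Pn_cast_zmod, hIoc, Finset.prod_Ico_eq_prod_range, show p - (r+1) = p-1-r by omega]
  set c := p - 1 - r with hc
  have step1 : ∀ j ∈ Finset.range c, ((r+1+j : ℕ) : ZMod p) = -(((c-j : ℕ) : ZMod p)) := by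
    intro j hj
    have hjc : j < c := Finset.mem_range.mp hj
    have he : r+1+j = p - (c-j) := by omega
    rw [he, Nat.cast_sub (by omega), ZMod.natCast_self, zero_sub]
  rw [Finset.prod_congr rfl step1]
  have step2 : ∀ j ∈ Finset.range c, -(((c-j : ℕ) : ZMod p)) = (-1) * ((c-j : ℕ) : ZMod p) := by
    intro j hj; ring
  rw [Finset.prod_congr rfl step2, Finset.prod_mul_distrib, Finset.prod_const, Finset.card_range]
  congr 1
  have step3 : ∀ j ∈ Finset.range c, ((c-j : ℕ) : ZMod p) = (fun j => ((j+1 : ℕ) : ZMod p)) (c-1-j) := by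
    intro j hj
    have hjc : j < c := Finset.mem_range.mp hj
    simp only
    congr 1
    omega
  rw [Finset.prod_congr rfl step3, Finset.prod_range_reflect (fun j => ((j+1 : ℕ) : ZMod p)) c,
    ← Nat.cast_prod]
  congr 1
  exact Finset.prod_range_add_one_eq_factorial c

lemma two_ne_zero_zmod (p : ℕ) [Fact p.Prime] (hodd : Odd p) : (2 : ZMod p) ≠ 0 := by
  have hp : p.Prime := Fact.out
  have h2 : ((2:ℕ) : ZMod p) = (2 : ZMod p) := by push_cast; rfl
  rw [← h2, Ne, ZMod.natCast_eq_zero_iff]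
  intro h
  have := Nat.le_of_dvd (by norm_num) h
  have := hp.two_le
  have := Nat.odd_iff.mp hodd
  omega

lemma T_val (p : ℕ) [Fact p.Prime] (hodd : Odd p) :
    ∑ r ∈ Finset.range p, ((Pn r (p-1) : ℕ) : ZMod p) * (-2)^r
      = 1 + ((∑ i ∈ Finset.Icc 1 (p-1), 2^(p-1-i) * i.factorial : ℕ) : ZMod p) := by
  have hp : p.Prime := Fact.out
  have hp1 : 1 ≤ p := hp.one_lt.le
  have hA : ∀ r ∈ Finset.range p, ((Pn r (p-1) : ℕ) : ZMod p) * (-2)^r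
      = ((p-1-r).factorial : ZMod p) * 2^r := by
    intro r hr
    have hrp : r < p := Finset.mem_range.mp hr
    rw [Pn_zmod_factorial p hp1 r hrp]
    have h2 : (-2 : ZMod p)^r = (-1)^r * 2^r := by
      rw [← neg_one_mul, mul_pow]
    rw [h2]
    have h3 : (-1 : ZMod p)^(p-1-r) * (-1)^r = 1 := by
      rw [← pow_add, show p-1-r + r = p-1 by omega]
      exact Even.neg_one_pow (by obtain ⟨k,hk⟩ := hodd; exact ⟨k, by omega⟩)
    calc (-1 : ZMod p)^(p-1-r) * ((p-1-r).factorial : ZMod p) * ((-1)^r * 2^r)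
        = ((-1 : ZMod p)^(p-1-r) * (-1)^r) * (((p-1-r).factorial : ZMod p) * 2^r) := by ring
      _ = ((p-1-r).factorial : ZMod p) * 2^r := by rw [h3, one_mul]
  rw [Finset.sum_congr rfl hA]
  have hB : ∀ r ∈ Finset.range p, ((p-1-r).factorial : ZMod p) * 2^r
      = (fun r => ((r.factorial : ZMod p) * 2^(p-1-r))) (p-1-r) := by
    intro r hr
    have hrp : r < p := Finset.mem_range.mp hr
    simp only
    congr 2
    omega
  rw [Finset.sum_congr rfl hB,
    Finset.sum_range_reflect (fun r => ((r.factorial : ZMod p) * 2^(p-1-r))) p,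
    show Finset.range p = Finset.range ((p-1)+1) by congr 1; omega,
    Finset.sum_range_succ']
  have hf0 : (Nat.factorial 0 : ZMod p) * 2^(p-1-0) = 1 := by
    rw [Nat.factorial_zero, Nat.cast_one, one_mul, show p-1-0 = p-1 by omega,
      ZMod.pow_card_sub_one_eq_one (two_ne_zero_zmod p hodd)]
  rw [hf0, add_comm]
  congr 1
  rw [show Finset.Icc 1 (p-1) = Finset.Ico 1 p by rw [← Finset.Ico_add_one_right_eq_Icc, show (p-1)+1 = p by omega],
    Nat.cast_sum, Finset.sum_Ico_eq_sum_range, show p - 1 = p-1 from rfl]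
  refine Finset.sum_congr rfl fun k hk => ?_
  have hkp : k < p - 1 := Finset.mem_range.mp hk
  push_cast
  rw [show p-1-(1+k) = p-1-(k+1) by omega, show (1+k) = (k+1) by omega]
  ring

lemma sum_eval (p s : ℕ) [Fact p.Prime] :
    ∑ i ∈ Finset.range (p*(s+1)), ((Pn i (p*(s+1)-1) : ℕ) : ZMod p) * (-2)^i
      = (-2)^s * ∑ r ∈ Finset.range p, ((Pn r (p-1) : ℕ) : ZMod p) * (-2)^r := by
  have hp : p.Prime := Fact.out
  have hp2 : 2 ≤ p := hp.two_le
  have hsplit : p*(s+1) = s*p + p := by ring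
  rw [hsplit]
  rw [Finset.range_eq_Ico,
    ← Finset.sum_Ico_consecutive _ (Nat.zero_le (s*p)) (by omega : s*p ≤ s*p + p)]
  have hzero : ∑ i ∈ Finset.Ico 0 (s*p), ((Pn i (s*p+p-1) : ℕ) : ZMod p) * (-2)^i = 0 := by
    refine Finset.sum_eq_zero fun i hi => ?_
    have hik : i < s*p := (Finset.mem_Ico.mp hi).2
    rw [Pn_cast_zmod]
    rw [Finset.prod_eq_zero (Finset.mem_Ioc.mpr ⟨hik, by omega⟩)
      (by rw [Nat.cast_mul, ZMod.natCast_self, mul_zero] : ((s*p : ℕ) : ZMod p) = 0)]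
    ring
  rw [hzero, zero_add, Finset.sum_Ico_eq_sum_range, show s*p+p - s*p = p by omega,
    Finset.mul_sum]
  refine Finset.sum_congr rfl fun r hr => ?_
  have hrp : r < p := Finset.mem_range.mp hr
  have hshift : ((Pn (s*p+r) (s*p+p-1) : ℕ) : ZMod p) = ((Pn r (p-1) : ℕ) : ZMod p) := by
    rw [Pn_cast_zmod, Pn_cast_zmod, show s*p+p-1 = s*p + (p-1) by omega,
      ← Finset.map_add_left_Ioc, Finset.prod_map]
    refine Finset.prod_congr rfl fun j hj => ?_
    simp only [addLeftEmbedding_apply]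
    rw [Nat.cast_add, Nat.cast_mul, ZMod.natCast_self, mul_zero, zero_add]
  rw [hshift]
  have hpow : (-2 : ZMod p)^(s*p+r) = (-2)^s * (-2)^r := by
    rw [pow_add, pow_mul, ZMod.pow_card]
  rw [hpow]
  ring

/-- Let `n ≡ 1 (mod 4)` with `n - 2 = p·t`, `p` an odd prime, `t` a positive
integer coprime to `p`, and `p ∤ ∑_{i=1}^{p-1} 2^{p-1-i}·i!`.  Then the `p`-adic
valuation of the integer `n!·𝔈ₙ(-n)` equals `1`; in particular `n!·𝔈ₙ(-n)` is
not the square of a rational number. -/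
theorem padicValRat_factorial_mul_E_eval_neg_n (n p t : ℕ) (hn : 0 < n)
    (h1 : n % 4 = 1) (hp : p.Prime) (hpodd : Odd p) (ht : 0 < t)
    (hnt : n - 2 = p * t) (hco : Nat.Coprime p t)
    (hnd : ¬ p ∣ ∑ i ∈ Finset.Icc 1 (p - 1), 2 ^ (p - 1 - i) * i.factorial) :
    padicValRat p ((n.factorial : ℚ) * (E n).eval (-(n : ℚ))) = 1 ∧
    ¬ ∃ q : ℚ, (n.factorial : ℚ) * (E n).eval (-(n : ℚ)) = q ^ 2 := by
  haveI : Fact p.Prime := ⟨hp⟩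
  have hp2 : 2 ≤ p := hp.two_le
  have hpne2 : p ≠ 2 := by
    rintro rfl
    exact (Nat.not_odd_iff_even.mpr (by norm_num)) hpodd
  have hp3 : 3 ≤ p := by
    rcases Nat.lt_or_ge p 3 with h | h
    · interval_cases p <;> omega
    · exact h
  have hpt3 : 3 ≤ p * t := le_trans (by omega) (Nat.mul_le_mul_left p ht)
  obtain ⟨u, rfl⟩ : ∃ u, n = u + 3 := ⟨n - 3, by omega⟩
  have hu1 : u + 1 = p * t := by omega
  obtain ⟨s, rfl⟩ : ∃ s, t = s + 1 := ⟨t - 1, by omega⟩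
  have hoddpt : Odd (u + 1) := by
    rw [Nat.odd_iff]; omega
  have hodds : Even s := by
    have hoddt : Odd (s + 1) := (Nat.odd_mul.mp (hu1 ▸ hoddpt)).2
    rw [Nat.even_iff]; rw [Nat.odd_iff] at hoddt; omega
  -- the integer A and its factorization
  set A : ℤ := (-((u+3:ℕ):ℤ))^(u+3) + 2 * ∑ i ∈ Finset.range (u+3), (Pn i (u+3) : ℤ) * (-((u+3:ℕ):ℤ))^i with hA
  set B : ℤ := ((s+1:ℕ) : ℤ) * (2 * ((u+3:ℕ):ℤ) * ((u+2:ℕ):ℤ) *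
      (∑ i ∈ Finset.range (u+1), (Pn i u : ℤ) * (-((u+3:ℕ):ℤ))^i) - ((u+3:ℕ):ℤ)^(u+2)) with hB
  have hfact : A = (p : ℤ) * B := by
    rw [hA, step2' u hoddpt, hB, show u+1 = p*(s+1) from hu1]
    push_cast
    ring
  -- B mod p
  have hcast3 : ((u+3:ℕ) : ZMod p) = 2 := by
    rw [show u+3 = p*(s+1)+2 by omega]
    push_cast [ZMod.natCast_self]
    ring
  have hcastu : ((u:ℕ) : ZMod p) = -1 := by
    push_cast at hcast3
    linear_combination hcast3
  set S : ℕ := ∑ i ∈ Finset.Icc 1 (p - 1), 2 ^ (p - 1 - i) * i.factorial with hS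
  have hSne : (S : ZMod p) ≠ 0 := by
    rw [Ne, ZMod.natCast_eq_zero_iff]
    exact hnd
  have htne : ((s+1 : ℕ) : ZMod p) ≠ 0 := by
    rw [Ne, ZMod.natCast_eq_zero_iff]
    exact (hp.coprime_iff_not_dvd.mp hco)
  have h2ne : (2 : ZMod p) ≠ 0 := two_ne_zero_zmod p hpodd
  have hSig : ((∑ i ∈ Finset.range (u+1), (Pn i u : ℤ) * (-((u+3:ℕ):ℤ))^i : ℤ) : ZMod p)
      = (-2 : ZMod p)^s * (1 + (S : ZMod p)) := by
    have e : ∀ i ∈ Finset.range (u+1),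
        ((Pn i u : ℕ) : ZMod p) * (-(((u:ℕ):ZMod p)+3))^i
          = ((Pn i u : ℕ) : ZMod p) * (-2:ZMod p)^i := by
      intro i _
      rw [hcastu]
      norm_num
    have e2 : ∀ i ∈ Finset.range (p*(s+1)),
        ((Pn i u : ℕ) : ZMod p) * (-2:ZMod p)^i
          = ((Pn i (p*(s+1)-1) : ℕ) : ZMod p) * (-2:ZMod p)^i := by
      intro i _
      rw [show u = p*(s+1)-1 by omega]
    push_cast
    rw [Finset.sum_congr rfl e,
      show Finset.range (u+1) = Finset.range (p*(s+1)) by rw [hu1],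
      Finset.sum_congr rfl e2, sum_eval p s, T_val p hpodd, ← hS]
  have hBzmod : ((B : ℤ) : ZMod p) = ((s+1:ℕ) : ZMod p) * 2^(s+2) * (S : ZMod p) := by
    push_cast at hSig ⊢
    rw [hB]
    push_cast
    rw [hSig, hcastu, show u+2 = p*(s+1)+1 by omega, pow_succ, pow_mul', ZMod.pow_card,
      Even.neg_pow hodds]
    ring
  have heval : (((u+3:ℕ)).factorial : ℚ) * (E (u+3)).eval (-((u+3:ℕ) : ℚ)) = (A : ℚ) := by
    rw [hA]; exact_mod_cast step1 (u+3)
  have hBzne : ((B : ℤ) : ZMod p) ≠ 0 := by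
    rw [hBzmod]
    exact mul_ne_zero (mul_ne_zero htne (pow_ne_zero _ h2ne)) hSne
  have hnotdvd : ¬ (p:ℤ) ∣ B := by
    intro h
    exact hBzne ((ZMod.intCast_zmod_eq_zero_iff_dvd B p).mpr h)
  have hBne : B ≠ 0 := by
    intro h
    rw [h] at hnotdvd
    exact hnotdvd (dvd_zero _)
  have hpne0 : (p:ℤ) ≠ 0 := Int.natCast_ne_zero.mpr hp.pos.ne'
  have hAne : A ≠ 0 := by
    rw [hfact]
    exact mul_ne_zero hpne0 hBne
  have hval : padicValRat p (A : ℚ) = 1 := by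
    rw [padicValRat.of_int, hfact, padicValInt.mul hpne0 hBne, padicValInt.self hp.one_lt,
      padicValInt.eq_zero_of_not_dvd hnotdvd]
    norm_num
  constructor
  · rw [heval]
    exact hval
  · rintro ⟨q, hq⟩
    rw [heval] at hq
    have hqne : q ≠ 0 := by
      rintro rfl
      rw [pow_two, mul_zero] at hq
      exact hAne (by exact_mod_cast hq)
    have h2v := padicValRat.pow (p := p) q (k := 2)
    rw [← hq, hval] at h2v
    omega
end
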